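/- For every odd positive integer n and every real t, the integral from -pi to pi of cos(xi/2)^n * e^{t*xi} d xi equals 2^{n+1} * cosh(pi*t) / ( C(n,(n-1)/2) * ((n+1)/2) * product over j = 0,...,(n-1)/2 of (1 + t^2/(j+1/2)^2) ), which in turn equals ( 2^{n+1} / ( C(n,(n-1)/2) * ((n+1)/2) ) ) * product over integers j >= (n+1)/2 of (1 + t^2/(j+1/2)^2). -/

import Mathlib

open Filter Finset Topology Real intervalIntegral
open Filter Finset Topology

lemma prod_subset_le_one_le {f : ℕ → ℝ} (h1 : ∀ i, 1 ≤ f i) {s t : Finset ℕ} (h : s ⊆ t) :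
    ∏ i ∈ s, f i ≤ ∏ i ∈ t, f i := by
  rw [← Finset.prod_sdiff h]
  have hone : (1:ℝ) ≤ ∏ x ∈ t \ s, f x := by
    calc (1:ℝ) = ∏ _x ∈ t \ s, (1:ℝ) := by simp
    _ ≤ ∏ x ∈ t \ s, f x :=
        Finset.prod_le_prod (fun i _ => zero_le_one) (fun i _ => h1 i)
  exact le_mul_of_one_le_left
    (Finset.prod_nonneg fun i _ => le_trans zero_le_one (h1 i)) hone

lemma hasProd_of_tendsto_one_le (f : ℕ → ℝ) (h1 : ∀ i, 1 ≤ f i) (L : ℝ)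
    (hL : Tendsto (fun N => ∏ i ∈ Finset.range N, f i) atTop (𝓝 L)) : HasProd f L := by
  have mono : Monotone (fun N => ∏ i ∈ Finset.range N, f i) := fun a b hab =>
    prod_subset_le_one_le h1 (Finset.range_subset_range.2 hab)
  have hlub := isLUB_of_tendsto_atTop mono hL
  have lub2 : IsLUB (Set.range fun s : Finset ℕ => ∏ i ∈ s, f i) L := by
    constructor
    · rintro x ⟨s, rfl⟩
      obtain ⟨N, hN⟩ := s.exists_nat_subset_range
      exact le_trans (prod_subset_le_one_le h1 hN) (hlub.1 ⟨N, rfl⟩)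
    · intro b hb
      apply hlub.2
      rintro x ⟨N, rfl⟩
      exact hb ⟨Finset.range N, rfl⟩
  exact tendsto_atTop_isLUB (fun s t hst => prod_subset_le_one_le h1 hst) lub2



lemma prod_range_two_mul_split (g : ℕ → ℝ) (N : ℕ) :
    ∏ k ∈ Finset.range (2*N), g k
      = (∏ j ∈ Finset.range N, g (2*j)) * ∏ j ∈ Finset.range N, g (2*j+1) := by
  induction N with
  | zero => simp
  | succ N ih =>
      have h2 : 2*(N+1) = 2*N + 1 + 1 := by ring
      rw [h2, Finset.prod_range_succ, Finset.prod_range_succ, Finset.prod_range_succ,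
        Finset.prod_range_succ, ih]
      ring

lemma tendsto_cosh_prod (t : ℝ) :
    Tendsto (fun N => ∏ j ∈ Finset.range N, (1 + t^2/((j:ℝ)+1/2)^2)) atTop
      (𝓝 (Real.cosh (Real.pi * t))) := by
  rcases eq_or_ne t 0 with rfl | ht
  · simp only [ne_eq, zero_pow, mul_zero, zero_div]
    simpa using tendsto_const_nhds (α := ℕ) (x := atTop) (a := (1:ℝ))
  set P : ℕ → ℝ := fun N => ∏ j ∈ Finset.range N, (1 + t^2/((j:ℝ)+1/2)^2) with hP
  set R : ℕ → ℝ := fun N => ∏ j ∈ Finset.range N, (1 + t^2/((j:ℝ)+1)^2) with hR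
  set S : ℕ → ℝ := fun N => ∏ k ∈ Finset.range N, (1 + 4*t^2/((k:ℝ)+1)^2) with hS
  have hsplit : ∀ N, S (2*N) = P N * R N := by
    intro N
    simp only [hS, hP, hR]
    rw [prod_range_two_mul_split (fun k => (1 + 4*t^2/((k:ℝ)+1)^2)) N]
    congr 1
    · apply Finset.prod_congr rfl; intro j _
      push_cast
      congr 1
      have h1 : ((2:ℝ)*(j:ℝ)+1) ≠ 0 := by positivity
      have h2 : ((j:ℝ)+1/2) ≠ 0 := by positivity
      field_simp
      ring
    · apply Finset.prod_congr rfl; intro j _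
      push_cast
      congr 1
      have h1 : ((2:ℝ)*(j:ℝ)+1+1) ≠ 0 := by positivity
      have h2 : ((j:ℝ)+1) ≠ 0 := by positivity
      field_simp
      ring
  -- complex Euler products
  have castprod : ∀ (u : ℝ) (N : ℕ),
      (∏ j ∈ Finset.range N, ((1:ℂ) - ((u:ℂ)*Complex.I)^2/((j:ℂ)+1)^2))
        = ((∏ j ∈ Finset.range N, (1 + u^2/((j:ℝ)+1)^2) : ℝ) : ℂ) := by
    intro u N
    rw [Complex.ofReal_prod]
    apply Finset.prod_congr rfl
    intro j _
    have : ((u:ℂ)*Complex.I)^2 = -(u^2 : ℂ) := by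
      rw [mul_pow, Complex.I_sq]; ring
    rw [this]
    push_cast
    ring
  have sinval : ∀ u : ℝ, Complex.sin ((Real.pi:ℂ) * ((u:ℂ)*Complex.I))
      = (Real.sinh (Real.pi * u) : ℂ) * Complex.I := by
    intro u
    have : (Real.pi:ℂ) * ((u:ℂ)*Complex.I) = ((Real.pi * u : ℝ):ℂ) * Complex.I := by
      push_cast; ring
    rw [this, Complex.sin_mul_I, Complex.ofReal_sinh]
  have hA : Tendsto (fun N => (Real.pi:ℂ) * (((2*t:ℝ):ℂ)*Complex.I) * ((S N : ℝ):ℂ)) atTop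
      (𝓝 ((Real.sinh (Real.pi * (2*t)) : ℂ) * Complex.I)) := by
    have := Complex.tendsto_euler_sin_prod (((2*t:ℝ):ℂ)*Complex.I)
    rw [sinval (2*t)] at this
    apply this.congr
    intro N
    rw [castprod (2*t) N]
    congr 2
    rw [hS]; push_cast; apply Finset.prod_congr rfl; intro j _; ring
  have hB : Tendsto (fun N => (Real.pi:ℂ) * (((t:ℝ):ℂ)*Complex.I) * ((R N : ℝ):ℂ)) atTop
      (𝓝 ((Real.sinh (Real.pi * t) : ℂ) * Complex.I)) := by
    have := Complex.tendsto_euler_sin_prod (((t:ℝ):ℂ)*Complex.I)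
    rw [sinval t] at this
    apply this.congr
    intro N
    rw [castprod t N]
  -- nonvanishing facts
  have hpi : (Real.pi : ℂ) ≠ 0 := by
    exact_mod_cast Real.pi_ne_zero
  have htc : (t : ℂ) ≠ 0 := by exact_mod_cast ht
  have hRpos : ∀ N, (0:ℝ) < R N := by
    intro N; apply Finset.prod_pos; intro j _; positivity
  have hsinh : Real.sinh (Real.pi * t) ≠ 0 := by
    rw [Real.sinh_ne_zero]
    exact mul_ne_zero Real.pi_ne_zero ht
  -- P N as a quotient
  have hquot : ∀ N, ((P N : ℝ):ℂ)
      = ((Real.pi:ℂ) * (((2*t:ℝ):ℂ)*Complex.I) * ((S (2*N) : ℝ):ℂ))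
        / (2 * ((Real.pi:ℂ) * (((t:ℝ):ℂ)*Complex.I) * ((R N : ℝ):ℂ))) := by
    intro N
    have hRne : ((R N : ℝ):ℂ) ≠ 0 := by exact_mod_cast (hRpos N).ne'
    have hden : (2:ℂ) * ((Real.pi:ℂ) * (((t:ℝ):ℂ)*Complex.I) * ((R N : ℝ):ℂ)) ≠ 0 :=
      mul_ne_zero two_ne_zero
        (mul_ne_zero (mul_ne_zero hpi (mul_ne_zero htc Complex.I_ne_zero)) hRne)
    rw [hsplit N, eq_div_iff hden]
    push_cast
    ring
  have hdiv : Tendsto (fun N => ((P N : ℝ):ℂ)) atTop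
      (𝓝 (((Real.sinh (Real.pi * (2*t)) : ℂ) * Complex.I)
        / (2 * ((Real.sinh (Real.pi * t) : ℂ) * Complex.I)))) := by
    have h1 : Tendsto (fun N => (Real.pi:ℂ) * (((2*t:ℝ):ℂ)*Complex.I) * ((S (2*N) : ℝ):ℂ))
        atTop (𝓝 ((Real.sinh (Real.pi * (2*t)) : ℂ) * Complex.I)) :=
      hA.comp (tendsto_atTop_atTop_of_monotone (fun a b hab => by omega)
        (fun b => ⟨b, by omega⟩))
    have h2 := hB.const_mul (2:ℂ)
    have hden : (2:ℂ) * ((Real.sinh (Real.pi * t) : ℂ) * Complex.I) ≠ 0 := by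
      apply mul_ne_zero two_ne_zero
      apply mul_ne_zero _ Complex.I_ne_zero
      exact_mod_cast hsinh
    have := h1.div h2 hden
    apply this.congr
    intro N
    exact (hquot N).symm
  have hval : ((Real.sinh (Real.pi * (2*t)) : ℂ) * Complex.I)
      / (2 * ((Real.sinh (Real.pi * t) : ℂ) * Complex.I))
      = ((Real.cosh (Real.pi * t) : ℝ) : ℂ) := by
    have h2 : Real.pi * (2*t) = 2 * (Real.pi * t) := by ring
    rw [h2, Real.sinh_two_mul]
    have hsc : ((Real.sinh (Real.pi*t) : ℂ)) ≠ 0 := by exact_mod_cast hsinh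
    have hden : (2:ℂ) * ((Real.sinh (Real.pi*t) : ℂ) * Complex.I) ≠ 0 :=
      mul_ne_zero two_ne_zero (mul_ne_zero hsc Complex.I_ne_zero)
    rw [div_eq_iff hden]
    push_cast
    ring
  rw [hval] at hdiv
  have hre := (Complex.continuous_re.tendsto _).comp hdiv
  simp only [Function.comp_def, Complex.ofReal_re] at hre
  exact hre



lemma cont_integrand (k : ℕ) (t : ℝ) :
    Continuous (fun ξ : ℝ => Real.cos (ξ/2)^k * Real.exp (t*ξ)) := by
  fun_prop

lemma integral_step (m : ℕ) (t : ℝ) :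
    ((2*(m:ℝ)+3)^2/2 + 2*t^2) *
        (∫ ξ in (-Real.pi)..Real.pi, Real.cos (ξ/2)^(2*m+3) * Real.exp (t*ξ))
      = (2*(m:ℝ)+3)*((m:ℝ)+1) *
        (∫ ξ in (-Real.pi)..Real.pi, Real.cos (ξ/2)^(2*m+1) * Real.exp (t*ξ)) := by
  set A : ℝ := (2*(m:ℝ)+3)*((m:ℝ)+1) with hA
  set B : ℝ := (2*(m:ℝ)+3)^2/2 + 2*t^2 with hB
  set f₁ : ℝ → ℝ := fun ξ => Real.cos (ξ/2)^(2*m+1) * Real.exp (t*ξ) with hf₁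
  set f₂ : ℝ → ℝ := fun ξ => Real.cos (ξ/2)^(2*m+3) * Real.exp (t*ξ) with hf₂
  set h : ℝ → ℝ := fun ξ =>
    ((2*(m:ℝ)+3) * Real.cos (ξ/2)^(2*m+2) * Real.sin (ξ/2)
      + 2*t*Real.cos (ξ/2)^(2*m+3)) * Real.exp (t*ξ) with hh
  have hderiv : ∀ ξ : ℝ, HasDerivAt h (-A * f₁ ξ + B * f₂ ξ) ξ := by
    intro ξ
    have hc : HasDerivAt (fun x : ℝ => Real.cos (x/2)) (-Real.sin (ξ/2) * (1/2)) ξ :=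
      ((hasDerivAt_id ξ).div_const 2).cos
    have hs : HasDerivAt (fun x : ℝ => Real.sin (x/2)) (Real.cos (ξ/2) * (1/2)) ξ :=
      ((hasDerivAt_id ξ).div_const 2).sin
    have hE : HasDerivAt (fun x : ℝ => Real.exp (t*x)) (Real.exp (t*ξ) * t) ξ := by
      simpa using ((hasDerivAt_id ξ).const_mul t).exp
    have hpow1 := hc.pow (2*m+2)
    rw [show 2*m+2-1 = 2*m+1 from by omega] at hpow1
    have hpow3 := hc.pow (2*m+3)
    rw [show 2*m+3-1 = 2*m+2 from by omega] at hpow3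
    have d1 := ((hpow1.const_mul ((2:ℝ)*(m:ℝ)+3)).mul hs).add (hpow3.const_mul (2*t))
    have d := d1.mul hE
    refine d.congr_deriv ?_
    symm
    simp only [Pi.add_apply, Pi.mul_apply, Pi.pow_apply]
    have hs2 : Real.sin (ξ/2)^2 = 1 - Real.cos (ξ/2)^2 := Real.sin_sq _
    rw [hA, hB, hf₁, hf₂]
    push_cast
    linear_combination ((2*(m:ℝ)+3)*((m:ℝ)+1) * Real.cos (ξ/2)^(2*m+1) * Real.exp (t*ξ)) * hs2
  have cf₁ : Continuous f₁ := by rw [hf₁]; fun_prop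
  have cf₂ : Continuous f₂ := by rw [hf₂]; fun_prop
  have i₁ : IntervalIntegrable (fun ξ => -A * f₁ ξ) MeasureTheory.volume
      (-Real.pi) Real.pi := (continuous_const.mul cf₁).intervalIntegrable _ _
  have i₂ : IntervalIntegrable (fun ξ => B * f₂ ξ) MeasureTheory.volume
      (-Real.pi) Real.pi := (continuous_const.mul cf₂).intervalIntegrable _ _
  have hint : IntervalIntegrable (fun ξ => -A * f₁ ξ + B * f₂ ξ) MeasureTheory.volume
      (-Real.pi) Real.pi := i₁.add i₂
  have key : (∫ ξ in (-Real.pi)..Real.pi, (-A * f₁ ξ + B * f₂ ξ)) = 0 := by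
    rw [intervalIntegral.integral_eq_sub_of_hasDerivAt (fun ξ _ => hderiv ξ) hint]
    rw [hh]
    simp [neg_div, Real.cos_pi_div_two, Real.sin_pi_div_two, zero_pow]
  rw [intervalIntegral.integral_add i₁ i₂,
    intervalIntegral.integral_const_mul, intervalIntegral.integral_const_mul] at key
  rw [hf₁, hf₂] at key ⊢
  linarith



lemma choose_id (m : ℕ) :
    (m+1)*(m+2)*Nat.choose (2*m+3) (m+1) = (2*m+2)*(2*m+3)*Nat.choose (2*m+1) m := by
  have h1 : Nat.choose (2*m+3) (m+1) = Nat.choose (2*m+3) (m+2) := by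
    rw [← Nat.choose_symm (by omega : m+2 ≤ 2*m+3)]
    congr 1
    omega
  have h2 := Nat.add_one_mul_choose_eq (2*m+2) (m+1)
  have h3 := Nat.add_one_mul_choose_eq (2*m+1) m
  rw [show 2*m+2+1 = 2*m+3 from by omega, show m+1+1 = m+2 from by omega] at h2
  rw [show 2*m+1+1 = 2*m+2 from by omega] at h3
  zify at h1 h2 h3 ⊢
  push_cast at h1 h2 h3 ⊢
  linear_combination ((m:ℤ)+1)*((m:ℤ)+2)*h1 - ((m:ℤ)+1)*h2 - (2*(m:ℤ)+3)*h3



lemma integral_base (t : ℝ) :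
    (∫ ξ in (-Real.pi)..Real.pi, Real.cos (ξ/2)^1 * Real.exp (t*ξ))
      = Real.cosh (Real.pi*t) / (t^2+1/4) := by
  have hne : (t^2+1/4 : ℝ) ≠ 0 := by positivity
  set F : ℝ → ℝ := fun ξ =>
    Real.exp (t*ξ) * (t * Real.cos (ξ/2) + (1/2) * Real.sin (ξ/2)) / (t^2+1/4) with hF
  have hder : ∀ ξ : ℝ, HasDerivAt F (Real.cos (ξ/2)^1 * Real.exp (t*ξ)) ξ := by
    intro ξ
    have hc : HasDerivAt (fun x : ℝ => Real.cos (x/2)) (-Real.sin (ξ/2) * (1/2)) ξ :=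
      ((hasDerivAt_id ξ).div_const 2).cos
    have hs : HasDerivAt (fun x : ℝ => Real.sin (x/2)) (Real.cos (ξ/2) * (1/2)) ξ :=
      ((hasDerivAt_id ξ).div_const 2).sin
    have hE : HasDerivAt (fun x : ℝ => Real.exp (t*x)) (Real.exp (t*ξ) * t) ξ := by
      simpa using ((hasDerivAt_id ξ).const_mul t).exp
    have hin := (hc.const_mul t).add (hs.const_mul ((1:ℝ)/2))
    have d := (hE.mul hin).div_const (t^2+1/4)
    refine d.congr_deriv ?_
    symm
    simp only [Pi.add_apply, Pi.mul_apply, Pi.pow_apply]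
    field_simp
    ring
  have hint : IntervalIntegrable (fun ξ : ℝ => Real.cos (ξ/2)^1 * Real.exp (t*ξ))
      MeasureTheory.volume (-Real.pi) Real.pi := Continuous.intervalIntegrable (by fun_prop) _ _
  rw [intervalIntegral.integral_eq_sub_of_hasDerivAt (fun ξ _ => hder ξ) hint]
  rw [hF]
  simp only [neg_div, Real.cos_pi_div_two, Real.sin_pi_div_two, Real.cos_neg, Real.sin_neg]
  rw [Real.cosh_eq, show Real.pi * t = t * Real.pi from mul_comm _ _]
  field_simp
  ring


lemma algebra_step (mR t Q X c c2 P : ℝ) (hQ : Q ≠ 0) (hc : c ≠ 0) (hc2 : c2 ≠ 0)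
    (hm1 : mR+1 ≠ 0) (hm2 : mR+2 ≠ 0) (hB : ((2*mR+3)^2/2+2*t^2) ≠ 0)
    (hs : ((mR+1)+1/2)^2 ≠ 0)
    (hC : (mR+1)*(mR+2)*c2 = (2*mR+2)*(2*mR+3)*c) :
    (2*mR+3)*(mR+1) / ((2*mR+3)^2/2 + 2*t^2) * (P * X / (c*(mR+1)*Q))
      = 4*P * X / (c2 * (mR+2) * (Q * (1 + t^2/((mR+1)+1/2)^2))) := by
  have hsinv : ((mR+1)+1/2)^2 * (((mR+1)+1/2)^2)⁻¹ = 1 := mul_inv_cancel₀ hs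
  have hu : (1 + t^2/((mR+1)+1/2)^2) ≠ 0 := by positivity
  rw [div_mul_div_comm, div_eq_div_iff (by
      exact mul_ne_zero hB (mul_ne_zero (mul_ne_zero hc hm1) hQ))
    (by exact mul_ne_zero (mul_ne_zero hc2 hm2) (mul_ne_zero hQ hu))]
  linear_combination ((2*mR+3)*P*X*Q*(1 + t^2/(((mR+1)+1/2)^2))) * hC
    + (4*P*X*Q*c*(2*mR+2)*t^2) * hsinv

lemma integral_formula (m : ℕ) (t : ℝ) :
    (∫ ξ in (-Real.pi)..Real.pi, Real.cos (ξ/2)^(2*m+1) * Real.exp (t*ξ))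
      = 2^(2*m+2) * Real.cosh (Real.pi*t) /
          (((2*m+1).choose m : ℝ) * ((m:ℝ)+1)
            * ∏ j ∈ Finset.range (m+1), (1 + t^2/((j:ℝ)+1/2)^2)) := by
  induction m with
  | zero =>
      rw [show 2*0+1 = 1 from rfl, integral_base t]
      norm_num
      rw [div_eq_div_iff (by positivity) (by positivity)]
      ring
  | succ m ih =>
      have hstep := integral_step m t
      have hBpos : (0:ℝ) < (2*(m:ℝ)+3)^2/2 + 2*t^2 := by positivity
      have hQpos : (0:ℝ) < ∏ j ∈ Finset.range (m+1), (1 + t^2/((j:ℝ)+1/2)^2) :=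
        Finset.prod_pos (fun j _ => by positivity)
      have hC1pos : (0:ℝ) < ((2*m+1).choose m : ℝ) := by
        exact_mod_cast Nat.choose_pos (by omega)
      have hC2pos : (0:ℝ) < ((2*m+3).choose (m+1) : ℝ) := by
        exact_mod_cast Nat.choose_pos (by omega)
      have hC : ((m:ℝ)+1)*((m:ℝ)+2)*((2*m+3).choose (m+1) : ℝ)
          = (2*(m:ℝ)+2)*(2*(m:ℝ)+3)*((2*m+1).choose m : ℝ) := by
        exact_mod_cast choose_id m
      have hC2 : ((2*m+3).choose (m+1) : ℝ)
          = (2*(m:ℝ)+2)*(2*(m:ℝ)+3)*((2*m+1).choose m : ℝ)/(((m:ℝ)+1)*((m:ℝ)+2)) := by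
        rw [eq_div_iff (by positivity)]
        linarith [hC]
      rw [show 2*(m+1)+1 = 2*m+3 from by omega, show 2*(m+1)+2 = 2*m+4 from by omega]
      have hI₂ : (∫ ξ in (-Real.pi)..Real.pi, Real.cos (ξ/2)^(2*m+3) * Real.exp (t*ξ))
          = ((2*(m:ℝ)+3)*((m:ℝ)+1)) / ((2*(m:ℝ)+3)^2/2 + 2*t^2)
            * (∫ ξ in (-Real.pi)..Real.pi, Real.cos (ξ/2)^(2*m+1) * Real.exp (t*ξ)) := by
        rw [div_mul_eq_mul_div, eq_div_iff hBpos.ne']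
        linarith [hstep]
      rw [Finset.prod_range_succ (fun j : ℕ => ((1:ℝ) + t^2/((j:ℝ)+1/2)^2)) (m+1)]
      rw [hI₂, ih]
      push_cast
      linear_combination algebra_step (m:ℝ) t
        (∏ j ∈ Finset.range (m+1), (1 + t^2/((j:ℝ)+1/2)^2))
        (Real.cosh (Real.pi*t)) (((2*m+1).choose m : ℝ)) (((2*m+3).choose (m+1) : ℝ))
        ((2:ℝ)^(2*m+2)) hQpos.ne' hC1pos.ne' hC2pos.ne'
        (by positivity) (by positivity) (by positivity) (by positivity) hC


/-- For every odd positive integer `n` and real `t`, the moment generating function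
`∫_{-π}^{π} cos(ξ/2)^n e^{tξ} dξ` equals
`2^(n+1) cosh(πt) / (C(n,(n-1)/2) ((n+1)/2) ∏_{j=0}^{(n-1)/2} (1 + t²/(j+1/2)²))`,
which in turn equals
`(2^(n+1)/(C(n,(n-1)/2) ((n+1)/2))) ∏_{j ≥ (n+1)/2} (1 + t²/(j+1/2)²)`. -/
theorem mgf_binomial_fourier (n : ℕ) (hodd : Odd n) (hn : 0 < n) (t : ℝ) :
    (∫ ξ in (-Real.pi)..Real.pi, Real.cos (ξ/2)^n * Real.exp (t * ξ))
      = 2^(n+1) * Real.cosh (Real.pi * t) /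
          ((n.choose ((n-1)/2) : ℝ) * (((n:ℝ)+1)/2) *
            ∏ j ∈ Finset.range ((n-1)/2 + 1), (1 + t^2 / ((j:ℝ) + 1/2)^2)) ∧
    (∫ ξ in (-Real.pi)..Real.pi, Real.cos (ξ/2)^n * Real.exp (t * ξ))
      = (2^(n+1) / ((n.choose ((n-1)/2) : ℝ) * (((n:ℝ)+1)/2))) *
          ∏' j : ℕ, (1 + t^2 / ((((n+1)/2 + j : ℕ) : ℝ) + 1/2)^2) := by
  obtain ⟨m, rfl⟩ : ∃ m, n = 2*m+1 := by
    obtain ⟨k, hk⟩ := hodd; exact ⟨k, by omega⟩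
  rw [show (2*m+1-1)/2 = m from by omega, show (2*m+1+1)/2 = m+1 from by omega,
    show 2*m+1+1 = 2*m+2 from by omega,
    show (((2*m+1:ℕ):ℝ)+1)/2 = (m:ℝ)+1 from by push_cast; ring]
  have hf1 : ∀ j : ℕ, (1:ℝ) ≤ 1 + t^2/((j:ℝ)+1/2)^2 := fun j =>
    le_add_of_nonneg_right (by positivity)
  have hQpos : (0:ℝ) < ∏ j ∈ Finset.range (m+1), (1 + t^2/((j:ℝ)+1/2)^2) :=
    Finset.prod_pos (fun j _ => by positivity)
  have hfirst := integral_formula m t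
  constructor
  · exact hfirst
  · -- tail product
    have hcosh := tendsto_cosh_prod t
    have hshift : Tendsto (fun N => ∏ j ∈ Finset.range (m+1+N), (1 + t^2/((j:ℝ)+1/2)^2))
        atTop (𝓝 (Real.cosh (Real.pi * t))) := by
      apply hcosh.comp
      exact tendsto_atTop_atTop_of_monotone (fun a b hab => by omega) (fun b => ⟨b, by omega⟩)
    have htail : Tendsto (fun N => ∏ j ∈ Finset.range N, (1 + t^2/(((m+1+j : ℕ):ℝ)+1/2)^2))
        atTop (𝓝 (Real.cosh (Real.pi * t)
          / ∏ j ∈ Finset.range (m+1), (1 + t^2/((j:ℝ)+1/2)^2))) := by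
      have := hshift.div_const (∏ j ∈ Finset.range (m+1), (1 + t^2/((j:ℝ)+1/2)^2))
      apply this.congr
      intro N
      rw [Finset.prod_range_add (fun j : ℕ => (1 + t^2/((j:ℝ)+1/2)^2)) (m+1) N]
      rw [mul_comm, mul_div_assoc, div_self hQpos.ne', mul_one]
    have hp : HasProd (fun j : ℕ => (1 + t^2/(((m+1+j : ℕ):ℝ)+1/2)^2))
        (Real.cosh (Real.pi * t)
          / ∏ j ∈ Finset.range (m+1), (1 + t^2/((j:ℝ)+1/2)^2)) := by
      apply hasProd_of_tendsto_one_le _ (fun j => by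
        exact le_add_of_nonneg_right (by positivity)) _ htail
    rw [hp.tprod_eq, hfirst]
    have hCpos : (0:ℝ) < ((2*m+1).choose m : ℝ) := by
      exact_mod_cast Nat.choose_pos (by omega)
    rw [div_mul_div_comm]
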